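/- Let k be a commutative ring of characteristic zero. Fix positive integers a_0 < a_1 < ⋯ < a_n, block sizes c_0, …, c_n ≥ 1, and let R := k[x_{ij} : 0 ≤ i ≤ n, 1 ≤ j ≤ c_i] be the polynomial ring graded by wt(x_{ij}) = a_i. Let d ≥ 0 and let V_d be a k-submodule of the weighted-homogeneous degree-d part of R satisfying the nondegeneracy hypothesis: for every quotient ring k' of k, every b > 0, and every k'-derivation ∂' of weight −b of the subring k'[x_{ij} : i ≥ 1] in the variables of weight > a_0, if ∂' vanishes on the image V'_d of V_d (reduce coefficients along k → k' and set all weight-a_0 variables x_{0j} to 0), then ∂' = 0. Then for every b > 0 with b ≠ a_0, every k-derivation of R of weight −b vanishing on V_d is zero. (Paper's Lemma II.d, first part: L_{−b}(V_d) = 0 for b ≠ a_0.) -/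

import Mathlib

/-- The index set of the variables `x_{ij}`, `0 ≤ i ≤ n`, `1 ≤ j ≤ c i`:
blocks `i = 0,…,n` of sizes `c i`. -/
abbrev BlockIdx (n : ℕ) (c : Fin (n + 1) → ℕ) : Type := (i : Fin (n + 1)) × Fin (c i)

/-- The weight of the variable `x_{ij}` is `a i`. -/
def blockWt {n : ℕ} {c : Fin (n + 1) → ℕ} (a : Fin (n + 1) → ℕ) (s : BlockIdx n c) : ℤ :=
  a s.1

/-- A derivation of a graded polynomial ring (weights `w`) has weight `-b` if each `∂ x_s` is
weighted homogeneous of degree `w s - b` (hence zero when `w s - b < 0`, since all weights are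
nonnegative). -/
def DerivationHasWt {k : Type*} [CommRing k] {τ : Type*} (w : τ → ℤ) (b : ℤ)
    (der : Derivation k (MvPolynomial τ k) (MvPolynomial τ k)) : Prop :=
  ∀ s : τ, MvPolynomial.IsWeightedHomogeneous w (der (MvPolynomial.X s)) (w s - b)

/-- The ring map `k[x_{ij}] → k'[x_{ij} : i ≥ 1]`, reducing coefficients along the quotient
`k → k' = k ⧸ J` and setting the weight-`a 0` variables `x_{0j}` to `0`. -/
noncomputable def restrictBlocks {k : Type*} [CommRing k] (n : ℕ) (c : Fin (n + 1) → ℕ)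
    (J : Ideal k) :
    MvPolynomial (BlockIdx n c) k →+*
      MvPolynomial {s : BlockIdx n c // s.1 ≠ 0} (k ⧸ J) :=
  (MvPolynomial.aeval fun s : BlockIdx n c =>
      if h : s.1 = 0 then 0 else MvPolynomial.X (⟨s, h⟩ : {s : BlockIdx n c // s.1 ≠ 0})
    ).toRingHom.comp (MvPolynomial.map (Ideal.Quotient.mk J))

section Auxiliary

open MvPolynomial

/-! ### Generic `Finsupp`/`sumToIter` coefficient lemmas -/

variable {k : Type*} [CommRing k] {S₁ S₂ : Type*}



lemma sumElim_single_left_add (a : S₁) (b : ℕ) (m : S₁ →₀ ℕ) (d : S₂ →₀ ℕ) :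
    Finsupp.sumElim (Finsupp.single a b + m) d
      = Finsupp.single (Sum.inl a) b + Finsupp.sumElim m d := by
  classical
  ext x
  cases x with
  | inl v =>
    simp only [Finsupp.sumElim_apply, Finsupp.add_apply, Sum.elim_inl,
      Finsupp.single_apply_left Sum.inl_injective]
  | inr v =>
    simp only [Finsupp.sumElim_apply, Finsupp.add_apply, Sum.elim_inr,
      Finsupp.single_eq_of_ne Sum.inr_ne_inl, zero_add]

lemma sumElim_single_right_add (a : S₂) (b : ℕ) (d : S₂ →₀ ℕ) :
    Finsupp.sumElim (0 : S₁ →₀ ℕ) (Finsupp.single a b + d)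
      = Finsupp.single (Sum.inr a) b + Finsupp.sumElim 0 d := by
  classical
  ext x
  cases x with
  | inl v =>
    simp only [Finsupp.sumElim_apply, Finsupp.add_apply, Sum.elim_inl,
      Finsupp.single_eq_of_ne Sum.inl_ne_inr, zero_add]
  | inr v =>
    simp only [Finsupp.sumElim_apply, Finsupp.add_apply, Sum.elim_inr,
      Finsupp.single_apply_left Sum.inr_injective]

lemma sumElim_zero_zero : (Finsupp.sumElim (0 : S₁ →₀ ℕ) (0 : S₂ →₀ ℕ)) = 0 := by
  ext x; cases x <;> simp

lemma sumToIter_monomial_sumElim (m : S₁ →₀ ℕ) (d : S₂ →₀ ℕ) (r : k) :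
    sumToIter k S₁ S₂ (monomial (Finsupp.sumElim m d) r) = monomial m (monomial d r) := by
  induction m using Finsupp.induction with
  | zero =>
    induction d using Finsupp.induction with
    | zero =>
      rw [sumElim_zero_zero, monomial_zero', monomial_zero', monomial_zero', sumToIter_C]
    | single_add a b d ha hb ih =>
      have h : monomial (Finsupp.single (Sum.inr a : S₁ ⊕ S₂) b + Finsupp.sumElim 0 d) r
          = (X (Sum.inr a : S₁ ⊕ S₂)) ^ b * monomial (Finsupp.sumElim 0 d) r := by
        rw [X_pow_eq_monomial, monomial_mul, one_mul]
      rw [sumElim_single_right_add, h, map_mul, map_pow, sumToIter_Xr, ih,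
        monomial_zero', ← map_pow, ← map_mul,
        X_pow_eq_monomial, monomial_mul, one_mul]
  | single_add a b m ha hb ih =>
    have h : monomial (Finsupp.single (Sum.inl a : S₁ ⊕ S₂) b + Finsupp.sumElim m d) r
        = (X (Sum.inl a : S₁ ⊕ S₂)) ^ b * monomial (Finsupp.sumElim m d) r := by
      rw [X_pow_eq_monomial, monomial_mul, one_mul]
    rw [sumElim_single_left_add, h, map_mul, map_pow, sumToIter_Xl, ih,
      X_pow_eq_monomial, monomial_mul, one_mul]

lemma sumElim_inj_iff (m₁ m₂ : S₁ →₀ ℕ) (d₁ d₂ : S₂ →₀ ℕ) :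
    Finsupp.sumElim m₁ d₁ = Finsupp.sumElim m₂ d₂ ↔ (m₁ = m₂ ∧ d₁ = d₂) := by
  constructor
  · intro h
    have h2 : (Finsupp.sumFinsuppEquivProdFinsupp.symm (m₁, d₁) : S₁ ⊕ S₂ →₀ ℕ)
        = Finsupp.sumFinsuppEquivProdFinsupp.symm (m₂, d₂) := h
    have := Finsupp.sumFinsuppEquivProdFinsupp.symm.injective h2
    exact ⟨congrArg Prod.fst this, congrArg Prod.snd this⟩
  · rintro ⟨rfl, rfl⟩; rfl

lemma coeff_coeff_sumToIter (q : MvPolynomial (S₁ ⊕ S₂) k) (m : S₁ →₀ ℕ) (d : S₂ →₀ ℕ) :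
    coeff d (coeff m (sumToIter k S₁ S₂ q)) = coeff (Finsupp.sumElim m d) q := by
  classical
  induction q using MvPolynomial.induction_on' with
  | add p q hp hq => rw [map_add, coeff_add, coeff_add, coeff_add, hp, hq]
  | monomial u r =>
    obtain ⟨m', d', rfl⟩ : ∃ m' d', u = Finsupp.sumElim m' d' :=
      ⟨_, _, (Finsupp.sumFinsuppEquivProdFinsupp.symm_apply_apply u).symm⟩
    rw [sumToIter_monomial_sumElim, coeff_monomial]
    by_cases h : m' = m
    · subst h
      rw [if_pos rfl, coeff_monomial, coeff_monomial]
      by_cases hd : d' = d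
      · subst hd; rw [if_pos rfl, if_pos rfl]
      · rw [if_neg hd, if_neg (fun hh => hd ((sumElim_inj_iff _ _ _ _).mp hh).2)]
    · rw [if_neg h, coeff_zero, coeff_monomial,
        if_neg (fun hh => h ((sumElim_inj_iff _ _ _ _).mp hh).1)]

/-! ### weight lemmas -/


lemma weight_mapDomain {α β M : Type*} [AddCommMonoid M] (w : β → M) (g : α → β) (u : α →₀ ℕ) :
    Finsupp.weight w (Finsupp.mapDomain g u) = Finsupp.weight (w ∘ g) u := by
  rw [Finsupp.weight_apply, Finsupp.weight_apply, Finsupp.sum_mapDomain_index]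
  · rfl
  · intro a; exact zero_smul _ _
  · intro a b₁ b₂; exact add_smul _ _ _

lemma sumElim_eq_mapDomain {S₁ S₂ : Type*} (m : S₁ →₀ ℕ) (d : S₂ →₀ ℕ) :
    Finsupp.sumElim m d = Finsupp.mapDomain Sum.inl m + Finsupp.mapDomain Sum.inr d := by
  classical
  ext x
  cases x with
  | inl v =>
    simp [Finsupp.sumElim_apply, Finsupp.mapDomain_apply Sum.inl_injective,
      Finsupp.mapDomain_notin_range _ _ (by simp : (Sum.inl v : S₁ ⊕ S₂) ∉ Set.range Sum.inr)]
  | inr v =>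
    simp [Finsupp.sumElim_apply, Finsupp.mapDomain_apply Sum.inr_injective,
      Finsupp.mapDomain_notin_range _ _ (by simp : (Sum.inr v : S₁ ⊕ S₂) ∉ Set.range Sum.inl)]

lemma weight_sumElim {S₁ S₂ M : Type*} [AddCommMonoid M] (w : S₁ ⊕ S₂ → M)
    (m : S₁ →₀ ℕ) (d : S₂ →₀ ℕ) :
    Finsupp.weight w (Finsupp.sumElim m d)
      = Finsupp.weight (w ∘ Sum.inl) m + Finsupp.weight (w ∘ Sum.inr) d := by
  rw [sumElim_eq_mapDomain, map_add, weight_mapDomain, weight_mapDomain]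

lemma weight_const_int (z : ℤ) {α : Type*} (m : α →₀ ℕ) :
    Finsupp.weight (fun _ : α => z) m = ((Finsupp.degree m : ℕ) : ℤ) * z := by
  rw [Finsupp.weight_apply, Finsupp.sum, Finsupp.degree_apply]
  push_cast
  rw [Finset.sum_mul]
  exact Finset.sum_congr rfl fun i _ => by rw [nsmul_eq_mul]


variable {n : ℕ} {c : Fin (n + 1) → ℕ}


noncomputable def phi (k : Type*) [CommRing k] (n : ℕ) (c : Fin (n + 1) → ℕ) :
    MvPolynomial (BlockIdx n c) k ≃ₐ[k]
      MvPolynomial {s : BlockIdx n c // s.1 = 0} (MvPolynomial {s : BlockIdx n c // s.1 ≠ 0} k) :=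
  (renameEquiv k (Equiv.sumCompl (fun s : BlockIdx n c => s.1 = 0)).symm).trans
    (sumAlgEquiv k _ _)

lemma phi_X0 (s : BlockIdx n c) (h : s.1 = 0) :
    phi k n c (X s) = X (⟨s, h⟩ : {s : BlockIdx n c // s.1 = 0}) := by
  simp only [phi, AlgEquiv.trans_apply, renameEquiv_apply, rename_X]
  rw [Equiv.sumCompl_symm_apply_of_pos (p := fun s : BlockIdx n c => s.1 = 0) h]
  exact sumAlgEquiv_X_inl _ _ _ _

lemma phi_X1 (s : BlockIdx n c) (h : ¬ s.1 = 0) :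
    phi k n c (X s) = C (X (⟨s, h⟩ : {s : BlockIdx n c // s.1 ≠ 0})) := by
  simp only [phi, AlgEquiv.trans_apply, renameEquiv_apply, rename_X]
  rw [Equiv.sumCompl_symm_apply_of_neg (p := fun s : BlockIdx n c => s.1 = 0) h]
  exact sumAlgEquiv_X_inr _ _ _ _

lemma phi_C (r : k) : phi k n c (C r) = C (C r) := by
  have := (phi k n c).commutes r
  simpa [algebraMap_eq, MvPolynomial.algebraMap_apply] using this

/-- Inclusion of the polynomial ring on variables of nonzero block. -/
noncomputable def iot (k : Type*) [CommRing k] (n : ℕ) (c : Fin (n + 1) → ℕ) :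
    MvPolynomial {s : BlockIdx n c // s.1 ≠ 0} k →ₐ[k] MvPolynomial (BlockIdx n c) k :=
  rename Subtype.val

noncomputable def iot0 (k : Type*) [CommRing k] (n : ℕ) (c : Fin (n + 1) → ℕ) :
    MvPolynomial {s : BlockIdx n c // s.1 = 0} k →ₐ[k] MvPolynomial (BlockIdx n c) k :=
  rename Subtype.val

lemma phi_iot (q : MvPolynomial {s : BlockIdx n c // s.1 ≠ 0} k) :
    phi k n c (iot k n c q) = C q := by
  induction q using MvPolynomial.induction_on with
  | C r => simp [iot, phi_C]
  | add p q hp hq => simp [map_add, hp, hq]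
  | mul_X p t hp =>
    rw [map_mul, map_mul, show (iot k n c) (X t) = X t.1 from rename_X _ _, hp,
      phi_X1 t.1 t.2, Subtype.eta, map_mul]

lemma phi_iot0_monomial (r : {s : BlockIdx n c // s.1 = 0} →₀ ℕ) :
    phi k n c (iot0 k n c (monomial r (1 : k)))
      = monomial r (1 : MvPolynomial {s : BlockIdx n c // s.1 ≠ 0} k) := by
  rw [monomial_eq, monomial_eq, map_one, map_one, one_mul, one_mul, map_finsuppProd,
    map_finsuppProd]
  apply Finsupp.prod_congr
  intro t _
  rw [map_pow, map_pow, iot0, rename_X, phi_X0 t.1 t.2, Subtype.eta]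

variable (der : Derivation k (MvPolynomial (BlockIdx n c) k) (MvPolynomial (BlockIdx n c) k))

/-- The coefficient-extracted derivation-like map. -/
noncomputable def Efun (m : {s : BlockIdx n c // s.1 = 0} →₀ ℕ)
    (q : MvPolynomial {s : BlockIdx n c // s.1 ≠ 0} k) :
    MvPolynomial {s : BlockIdx n c // s.1 ≠ 0} k :=
  coeff m (phi k n c (der (iot k n c q)))

lemma Efun_add (m) (q₁ q₂) : Efun der m (q₁ + q₂) = Efun der m q₁ + Efun der m q₂ := by
  simp [Efun, map_add, coeff_add]

lemma Efun_zero (m) : Efun der m 0 = 0 := by simp [Efun]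

lemma Efun_C (m) (r : k) : Efun der m (C r) = 0 := by
  have h1 : (iot k n c) (C r : MvPolynomial {s : BlockIdx n c // s.1 ≠ 0} k) = C r := by
    simp [iot]
  rw [Efun, h1, show (C r : MvPolynomial (BlockIdx n c) k) = algebraMap k _ r from rfl,
    Derivation.map_algebraMap, map_zero, coeff_zero]

lemma Efun_mul (m) (q₁ q₂) :
    Efun der m (q₁ * q₂) = q₁ * Efun der m q₂ + q₂ * Efun der m q₁ := by
  rw [Efun, map_mul, Derivation.leibniz, smul_eq_mul, smul_eq_mul, map_add, map_mul, map_mul,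
    phi_iot, phi_iot, coeff_add, coeff_C_mul, coeff_C_mul, Efun, Efun]

lemma Efun_X (m) (t : {s : BlockIdx n c // s.1 ≠ 0}) :
    Efun der m (X t) = coeff m (phi k n c (der (X t.1))) := by
  rw [Efun, show (iot k n c) (X t) = X t.1 from rename_X _ _]

lemma Efun_eq_zero_of_X (m) (hX : ∀ t, Efun der m (X t) = 0) (q) : Efun der m q = 0 := by
  induction q using MvPolynomial.induction_on with
  | C r => exact Efun_C der m r
  | add p q hp hq => rw [Efun_add, hp, hq, add_zero]
  | mul_X p t hp => rw [Efun_mul, hp, hX, mul_zero, mul_zero, add_zero]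

lemma der_iot0 (h0 : ∀ s : BlockIdx n c, s.1 = 0 → der (X s) = 0)
    (q : MvPolynomial {s : BlockIdx n c // s.1 = 0} k) : der (iot0 k n c q) = 0 := by
  induction q using MvPolynomial.induction_on with
  | C r =>
    rw [show (iot0 k n c) (C r : MvPolynomial {s : BlockIdx n c // s.1 = 0} k) = C r by
      simp [iot0]]
    exact der.map_algebraMap r
  | add p q hp hq => rw [map_add, map_add, hp, hq, add_zero]
  | mul_X p t hp =>
    rw [map_mul, Derivation.leibniz, show (iot0 k n c) (X t) = X t.1 from rename_X _ _,
      hp, h0 t.1 t.2, smul_zero, smul_zero, add_zero]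

lemma phi_symm_monomial (r) (bb : MvPolynomial {s : BlockIdx n c // s.1 ≠ 0} k) :
    (phi k n c).symm (monomial r bb) = iot k n c bb * iot0 k n c (monomial r 1) := by
  apply (phi k n c).injective
  rw [AlgEquiv.apply_symm_apply, map_mul, phi_iot, phi_iot0_monomial, C_mul_monomial, mul_one]

lemma Efun_key (m) (h0 : ∀ s : BlockIdx n c, s.1 = 0 → der (X s) = 0)
    (hmin : ∀ m', Finsupp.degree m' < Finsupp.degree m →
      ∀ q, Efun der m' q = 0)
    (f : MvPolynomial (BlockIdx n c) k) (hf : der f = 0) :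
    Efun der m (coeff 0 (phi k n c f)) = 0 := by
  obtain ⟨F, rfl⟩ : ∃ F, f = (phi k n c).symm F :=
    ⟨phi k n c f, (AlgEquiv.symm_apply_apply _ _).symm⟩
  rw [AlgEquiv.apply_symm_apply]
  have expand : der ((phi k n c).symm F) =
      ∑ r ∈ F.support, iot0 k n c (monomial r 1) * der (iot k n c (coeff r F)) := by
    conv_lhs => rw [← support_sum_monomial_coeff F]
    rw [map_sum, map_sum]
    refine Finset.sum_congr rfl fun r _ => ?_
    rw [phi_symm_monomial, Derivation.leibniz, der_iot0 der h0, smul_zero, zero_add,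
      smul_eq_mul]
  have key : (0 : MvPolynomial {s : BlockIdx n c // s.1 ≠ 0} k) =
      ∑ r ∈ F.support, if r ≤ m then Efun der (m - r) (coeff r F) else 0 := by
    have h1 := congrArg (fun p => coeff m (phi k n c p)) expand
    simp only [hf, map_zero, coeff_zero] at h1
    rw [map_sum, coeff_sum] at h1
    refine h1.trans (Finset.sum_congr rfl fun r _ => ?_)
    rw [map_mul, phi_iot0_monomial, coeff_monomial_mul']
    split
    · rw [one_mul]; rfl
    · rfl
  rw [key]
  rw [Finset.sum_eq_single 0]
  · rw [if_pos (zero_le : 0 ≤ m), tsub_zero]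
  · intro r hr hr0
    by_cases hle : r ≤ m
    · rw [if_pos hle]
      refine hmin (m - r) ?_ _
      have h1 : m - r + r = m := tsub_add_cancel_of_le hle
      have h2 : Finsupp.degree (m - r) + Finsupp.degree r = Finsupp.degree m := by
        conv_rhs => rw [← h1]
        simp [Finsupp.degree_eq_weight_one, map_add]
      have h3 : 0 < Finsupp.degree r :=
        Nat.pos_of_ne_zero fun h => hr0 ((Finsupp.degree_eq_zero_iff r).mp h)
      omega
    · rw [if_neg hle]
  · intro h
    rw [notMem_support_iff.mp h, if_pos (zero_le : 0 ≤ m), Efun_zero]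


lemma wh_map {k k' : Type*} [CommRing k] [CommRing k'] {σ M : Type*} [AddCommMonoid M]
    (φ : k →+* k') {w : σ → M} {p : MvPolynomial σ k} {e : M}
    (hp : IsWeightedHomogeneous w p e) :
    IsWeightedHomogeneous w (MvPolynomial.map φ p) e := fun d hd =>
  hp fun h => hd (by rw [coeff_map, h, map_zero])

lemma coeff_coeff_phi (p : MvPolynomial (BlockIdx n c) k)
    (m : {s : BlockIdx n c // s.1 = 0} →₀ ℕ) (d : {s : BlockIdx n c // s.1 ≠ 0} →₀ ℕ) :
    coeff d (coeff m (phi k n c p))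
      = coeff (Finsupp.mapDomain (⇑(Equiv.sumCompl (fun s : BlockIdx n c => s.1 = 0)))
          (Finsupp.sumElim m d)) p := by
  rw [phi, AlgEquiv.trans_apply, renameEquiv_apply,
    show (sumAlgEquiv k _ _) ((rename ⇑(Equiv.sumCompl (fun s : BlockIdx n c => s.1 = 0)).symm) p)
      = sumToIter k _ _ ((rename ⇑(Equiv.sumCompl (fun s : BlockIdx n c => s.1 = 0)).symm) p)
      from RingHom.congr_fun (MvPolynomial.ringHom_ext
        (f := (sumAlgEquiv k {s : BlockIdx n c // s.1 = 0} {s : BlockIdx n c // s.1 ≠ 0}).toRingEquiv.toRingHom)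
        (g := sumToIter k _ _) (fun r => by simp [sumToIter_C])
        (fun i => by cases i <;> simp [sumToIter_Xl, sumToIter_Xr])) _,
    coeff_coeff_sumToIter]
  set e := Equiv.sumCompl (fun s : BlockIdx n c => s.1 = 0) with he
  have h := coeff_rename_mapDomain (⇑e.symm) e.symm.injective p
    (Finsupp.mapDomain (⇑e) (Finsupp.sumElim m d))
  rw [← Finsupp.mapDomain_comp, show (⇑e.symm ∘ ⇑e) = id from funext (e.symm_apply_apply),
    Finsupp.mapDomain_id] at h
  exact h

lemma wh_coeff_phi (a : Fin (n + 1) → ℕ) {p : MvPolynomial (BlockIdx n c) k} {e : ℤ}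
    (hp : IsWeightedHomogeneous (blockWt a) p e) (m : {s : BlockIdx n c // s.1 = 0} →₀ ℕ) :
    IsWeightedHomogeneous (fun t : {s : BlockIdx n c // s.1 ≠ 0} => (a t.1.1 : ℤ))
      (coeff m (phi k n c p)) (e - ((Finsupp.degree m : ℕ) : ℤ) * (a 0 : ℤ)) := by
  intro d hd
  rw [coeff_coeff_phi] at hd
  have h := hp hd
  rw [weight_mapDomain, weight_sumElim] at h
  have h1 : ((blockWt a ∘ ⇑(Equiv.sumCompl (fun s : BlockIdx n c => s.1 = 0))) ∘ Sum.inl)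
      = fun _ : {s : BlockIdx n c // s.1 = 0} => (a 0 : ℤ) := by
    funext t
    show blockWt a ((Equiv.sumCompl (fun s : BlockIdx n c => s.1 = 0)) (Sum.inl t)) = _
    rw [Equiv.sumCompl_apply_inl]
    show (a t.1.1 : ℤ) = (a 0 : ℤ)
    rw [t.2]
  have h2 : ((blockWt a ∘ ⇑(Equiv.sumCompl (fun s : BlockIdx n c => s.1 = 0))) ∘ Sum.inr)
      = fun t : {s : BlockIdx n c // s.1 ≠ 0} => (a t.1.1 : ℤ) := rfl
  rw [h1, h2, weight_const_int] at h
  linarith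

lemma wh_eq_zero (a : Fin (n + 1) → ℕ) (hmono : Monotone a) (e : ℤ) (he0 : e ≠ 0)
    (helt : e < (a 0 : ℤ)) (p : MvPolynomial (BlockIdx n c) k)
    (hp : IsWeightedHomogeneous (blockWt a) p e) : p = 0 := by
  apply MvPolynomial.ext
  intro d
  rw [coeff_zero]
  by_contra hne
  have h := hp hne
  rcases eq_or_ne d 0 with rfl | hd0
  · rw [map_zero] at h
    exact he0 h.symm
  · obtain ⟨s, hs⟩ := (Finsupp.support_nonempty_iff.mpr hd0)
    have hterm : (a 0 : ℤ) ≤ (d s) • blockWt a s := by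
      have h1 : 1 ≤ d s := Nat.one_le_iff_ne_zero.mpr (Finsupp.mem_support_iff.mp hs)
      have h2 : (a 0 : ℤ) ≤ blockWt a s := by
        show (a 0 : ℤ) ≤ (a s.1 : ℤ)
        exact_mod_cast hmono (Fin.zero_le s.1)
      have h3 : (0 : ℤ) ≤ blockWt a s := le_trans (by positivity) h2
      calc (a 0 : ℤ) ≤ blockWt a s := h2
        _ = (1 : ℕ) • blockWt a s := (one_smul ℕ _).symm
        _ ≤ (d s) • blockWt a s := by
            rw [nsmul_eq_mul, nsmul_eq_mul]
            exact mul_le_mul_of_nonneg_right (by exact_mod_cast h1) h3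
    have hle : (a 0 : ℤ) ≤ Finsupp.weight (blockWt a) d := by
      rw [Finsupp.weight_apply, Finsupp.sum]
      refine le_trans hterm (Finset.single_le_sum (f := fun i => (d i) • blockWt a i) ?_ hs)
      intro i _
      show (0 : ℤ) ≤ (d i) • blockWt a i
      rw [nsmul_eq_mul]
      have h4 : (0 : ℤ) ≤ blockWt a i := by
        show (0 : ℤ) ≤ (a i.1 : ℤ); positivity
      positivity
    rw [h] at hle
    linarith

lemma restrict_eq (J : Ideal k) (f : MvPolynomial (BlockIdx n c) k) :
    restrictBlocks n c J f
      = MvPolynomial.map (Ideal.Quotient.mk J) (coeff 0 (phi k n c f)) := by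
  have key : restrictBlocks n c J = RingHom.comp (MvPolynomial.map (Ideal.Quotient.mk J))
      (RingHom.comp constantCoeff (phi k n c).toAlgHom.toRingHom) := by
    apply MvPolynomial.ringHom_ext
    · intro r
      simp [restrictBlocks, phi_C]
    · intro s
      by_cases h : s.1 = 0
      · simp [restrictBlocks, h, phi_X0 s h]
      · simp [restrictBlocks, h, phi_X1 s h]
  rw [key]
  rfl

end Auxiliary

open MvPolynomial in
theorem lemma_II_d_part_one (k : Type*) [CommRing k] [CharZero k]
    (n : ℕ) (c : Fin (n + 1) → ℕ) (hc : ∀ i, 1 ≤ c i)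
    (a : Fin (n + 1) → ℕ) (ha : StrictMono a) (ha0 : 0 < a 0)
    (d : ℕ)
    (V : Submodule k (MvPolynomial (BlockIdx n c) k))
    (hV : ∀ f ∈ V, MvPolynomial.IsWeightedHomogeneous (blockWt a) f (d : ℤ))
    (hnd : ∀ (J : Ideal k) (b : ℕ), 0 < b →
      ∀ der : Derivation (k ⧸ J) (MvPolynomial {s : BlockIdx n c // s.1 ≠ 0} (k ⧸ J))
          (MvPolynomial {s : BlockIdx n c // s.1 ≠ 0} (k ⧸ J)),
        DerivationHasWt (fun t : {s : BlockIdx n c // s.1 ≠ 0} => (a t.1.1 : ℤ)) (b : ℤ) der →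
        (∀ f ∈ V, der (restrictBlocks n c J f) = 0) → der = 0) :
    ∀ b : ℕ, 0 < b → b ≠ a 0 →
      ∀ der : Derivation k (MvPolynomial (BlockIdx n c) k) (MvPolynomial (BlockIdx n c) k),
        DerivationHasWt (blockWt a) (b : ℤ) der →
        (∀ f ∈ V, der f = 0) → der = 0 := by
  intro b hb hbne der hwt hvan
  -- Step 1: the derivation kills the weight-`a 0` variables.
  have h0 : ∀ s : BlockIdx n c, s.1 = 0 → der (X s) = 0 := by
    intro s hs
    have hw := hwt s
    have hbw : blockWt a s = (a 0 : ℤ) := by unfold blockWt; rw [hs]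
    rw [hbw] at hw
    refine wh_eq_zero a ha.monotone _ ?_ ?_ _ hw
    · intro h
      apply hbne
      have : (b : ℤ) = (a 0 : ℤ) := by linarith
      exact_mod_cast this
    · have : (0 : ℤ) < b := by exact_mod_cast hb
      linarith
  -- the injection of coefficient rings
  have hmkinj : Function.Injective (Ideal.Quotient.mk (⊥ : Ideal k)) :=
    (RingHom.injective_iff_ker_eq_bot _).mpr (Ideal.mk_ker)
  have hinj : Function.Injective
      (MvPolynomial.map (σ := {s : BlockIdx n c // s.1 ≠ 0}) (Ideal.Quotient.mk (⊥ : Ideal k))) :=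
    MvPolynomial.map_injective _ hmkinj
  -- Step 2: strong induction on the total degree in the weight-`a 0` variables.
  have main : ∀ N : ℕ, ∀ m : ({s : BlockIdx n c // s.1 = 0} →₀ ℕ), Finsupp.degree m = N →
      ∀ q, Efun der m q = 0 := by
    intro N
    induction N using Nat.strong_induction_on with
    | _ N IH =>
      intro m hmN
      have hmin : ∀ m', Finsupp.degree m' < Finsupp.degree m → ∀ q, Efun der m' q = 0 := by
        intro m' h q
        exact IH _ (hmN ▸ h) m' rfl q
      set ψ := MvPolynomial.map (σ := {s : BlockIdx n c // s.1 ≠ 0})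
        (Ideal.Quotient.mk (⊥ : Ideal k)) with hψ
      set der' := mkDerivation (k ⧸ (⊥ : Ideal k))
        (fun t : {s : BlockIdx n c // s.1 ≠ 0} => ψ (Efun der m (X t))) with hder'
      have hcomm : ∀ q, der' (ψ q) = ψ (Efun der m q) := by
        intro q
        induction q using MvPolynomial.induction_on with
        | C r =>
          rw [MvPolynomial.map_C, derivation_C, Efun_C, map_zero]
        | add p q hp hq =>
          rw [map_add, map_add, hp, hq, Efun_add, map_add]
        | mul_X p t hp =>
          rw [map_mul, MvPolynomial.map_X, Derivation.leibniz, smul_eq_mul, smul_eq_mul, hp,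
            mkDerivation_X, Efun_mul, map_add, map_mul, map_mul, MvPolynomial.map_X]
      set b' : ℕ := b + Finsupp.degree m * a 0 with hb'def
      have hb' : 0 < b' := lt_of_lt_of_le hb (Nat.le_add_right _ _)
      have hwt' : DerivationHasWt (fun t : {s : BlockIdx n c // s.1 ≠ 0} => (a t.1.1 : ℤ))
          (b' : ℤ) der' := by
        intro t
        rw [hder', mkDerivation_X, Efun_X]
        have hdeg : (fun t : {s : BlockIdx n c // s.1 ≠ 0} => (a t.1.1 : ℤ)) t - (b' : ℤ)
            = ((blockWt a t.1 - b) - ((Finsupp.degree m : ℕ) : ℤ) * (a 0 : ℤ)) := by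
          show (a t.1.1 : ℤ) - (b' : ℤ) = ((a t.1.1 : ℤ) - b) - ((Finsupp.degree m : ℕ) : ℤ) * a 0
          rw [hb'def]
          push_cast
          ring
        rw [hdeg]
        exact wh_map _ (wh_coeff_phi a (hwt t.1) m)
      have hvan' : ∀ f ∈ V, der' (restrictBlocks n c ⊥ f) = 0 := by
        intro f hf
        rw [restrict_eq, ← hψ, hcomm, Efun_key der m h0 hmin f (hvan f hf), map_zero]
      have hzero : der' = 0 := hnd ⊥ b' hb' der' hwt' hvan'
      refine fun q => Efun_eq_zero_of_X der m (fun t => ?_) q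
      apply hinj
      rw [map_zero]
      have := congrArg (fun D : Derivation (k ⧸ (⊥ : Ideal k)) _ _ => D (X t)) hzero
      simpa [hder', mkDerivation_X] using this
  have hallE : ∀ m q, Efun der m q = 0 := fun m => main (Finsupp.degree m) m rfl
  -- Step 3: conclude.
  apply MvPolynomial.derivation_ext (D₂ := 0)
  intro s
  rw [Derivation.coe_zero, Pi.zero_apply]
  by_cases h : s.1 = 0
  · exact h0 s h
  · have hz : ∀ m, coeff m (phi k n c (der (X s))) = 0 := by
      intro m
      have := hallE m (X ⟨s, h⟩)
      rwa [Efun_X] at this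
    have hphi : phi k n c (der (X s)) = 0 :=
      MvPolynomial.ext _ _ fun m => by rw [hz, coeff_zero]
    exact (phi k n c).injective (by rw [hphi, map_zero])
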